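/- Let y ∈ L¹(0,1) and Ω(y) = {x ∈ L¹(0,1) : x ≺ y} (Hardy–Littlewood–Pólya majorisation). If x is an extreme point of Ω(y) and ∫₀ˢ λ(t; y) dt > ∫₀ˢ λ(t; x) dt for all s in an open interval (t₁, t₂) ⊂ (0,1), then the decreasing rearrangement λ(x) is a step function on (t₁, t₂) (i.e., locally constant except at finitely many points on each compact subinterval, in fact taking at most countably many values with each level set of λ(x) in (t₁,t₂) an interval and λ(x) piecewise constant there). -/

import Mathlib

open MeasureTheory Set

/-- The decreasing rearrangement (spectral scale) of `f` on `(0,1)`. -/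
noncomputable def rr (f : ℝ → ℝ) (t : ℝ) : ℝ :=
  sInf {s : ℝ | volume {u ∈ Ioo (0:ℝ) 1 | s < f u} ≤ ENNReal.ofReal t}

/-- Hardy–Littlewood–Pólya majorisation `g ≺ f` on `(0,1)`. -/
def Maj (g f : ℝ → ℝ) : Prop :=
  (∀ s ∈ Ico (0:ℝ) 1, (∫ t in Ioo (0:ℝ) s, rr g t) ≤ ∫ t in Ioo (0:ℝ) s, rr f t) ∧
    (∫ t in Ioo (0:ℝ) 1, rr g t) = ∫ t in Ioo (0:ℝ) 1, rr f t

/-- The orbit `Ω(y)` of all integrable functions on `(0,1)` majorised by `y`. -/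
def Omega (y : ℝ → ℝ) : Set (ℝ → ℝ) :=
  {x | IntegrableOn x (Ioo (0:ℝ) 1) ∧ Maj x y}

/-- `x` is an extreme point of the convex set `Ω` (functions identified a.e. on `(0,1)`). -/
def ExtremePt (Ω : Set (ℝ → ℝ)) (x : ℝ → ℝ) : Prop :=
  x ∈ Ω ∧ ∀ x₁ ∈ Ω, ∀ x₂ ∈ Ω,
    (∀ᵐ u ∂(volume.restrict (Ioo (0:ℝ) 1)), x u = (x₁ u + x₂ u) / 2) →
    (∀ᵐ u ∂(volume.restrict (Ioo (0:ℝ) 1)), x₁ u = x₂ u)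

section AuxRR
open Filter
namespace RRAux

noncomputable def nu : Measure ℝ := volume.restrict (Ioo (0:ℝ) 1)

noncomputable def dd (f : ℝ → ℝ) (s : ℝ) : ENNReal := volume {u ∈ Ioo (0:ℝ) 1 | s < f u}

lemma dd_eq (f : ℝ → ℝ) (s : ℝ) : dd f s = nu {u | s < f u} := by
  rw [nu, Measure.restrict_apply' measurableSet_Ioo]
  rw [dd]
  congr 1
  ext u
  simp [and_comm]

lemma dd_anti (f : ℝ → ℝ) : Antitone (dd f) := by
  intro s s' h
  exact measure_mono (fun u hu => ⟨hu.1, lt_of_le_of_lt h hu.2⟩)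

instance : IsFiniteMeasure nu := by
  constructor
  rw [nu, Measure.restrict_apply' measurableSet_Ioo]
  simp [Real.volume_Ioo]

lemma nu_univ : nu univ = 1 := by
  rw [nu, Measure.restrict_apply' measurableSet_Ioo]
  simp [Real.volume_Ioo]

lemma dd_le_one (f : ℝ → ℝ) (s : ℝ) : dd f s ≤ 1 := by
  rw [dd_eq]
  rw [← nu_univ]
  exact measure_mono (subset_univ _)

lemma dd_ne_top (f : ℝ → ℝ) (s : ℝ) : dd f s ≠ ⊤ :=
  ne_top_of_le_ne_top ENNReal.one_ne_top (dd_le_one f s)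

lemma rr_eq (f : ℝ → ℝ) (t : ℝ) : rr f t = sInf {s | dd f s ≤ ENNReal.ofReal t} := rfl

lemma dd_congr {f g : ℝ → ℝ} (h : f =ᵐ[nu] g) : dd f = dd g := by
  funext s
  rw [dd_eq, dd_eq]
  apply measure_congr
  filter_upwards [h] with u hu
  change (s < f u) = (s < g u)
  rw [hu]

lemma rr_congr {f g : ℝ → ℝ} (h : f =ᵐ[nu] g) : rr f = rr g := by
  funext t
  rw [rr_eq, rr_eq, dd_congr h]

end RRAux

namespace L2

open RRAux

variable {f : ℝ → ℝ}

lemma SS_nonempty (hf : Measurable f) {t : ℝ} (ht : 0 < t) :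
    ∃ s : ℝ, dd f s ≤ ENNReal.ofReal t := by
  have hmeas : ∀ n : ℕ, NullMeasurableSet {u : ℝ | (n:ℝ) < f u} nu :=
    fun n => (hf measurableSet_Ioi).nullMeasurableSet
  have hanti : Directed (· ⊇ ·) (fun n : ℕ => {u : ℝ | (n:ℝ) < f u}) := by
    apply Antitone.directed_ge
    intro m n hmn u hu
    simp only [mem_setOf_eq] at hu ⊢
    exact lt_of_le_of_lt (by exact_mod_cast hmn) hu
  have hempty : (⋂ n : ℕ, {u : ℝ | (n:ℝ) < f u}) = ∅ := by
    ext u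
    simp only [mem_iInter, mem_setOf_eq, mem_empty_iff_false, iff_false, not_forall, not_lt]
    obtain ⟨n, hn⟩ := exists_nat_gt (f u)
    exact ⟨n, hn.le⟩
  have h0 : (⨅ n : ℕ, nu {u : ℝ | (n:ℝ) < f u}) = 0 := by
    rw [← Directed.measure_iInter hmeas hanti ⟨0, measure_ne_top nu _⟩, hempty, measure_empty]
  by_contra hcon
  push_neg at hcon
  have : ENNReal.ofReal t ≤ ⨅ n : ℕ, nu {u : ℝ | (n:ℝ) < f u} := by
    apply le_iInf
    intro n
    have h3 : ENNReal.ofReal t < dd f (n:ℝ) := hcon (n:ℝ)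
    rw [dd_eq] at h3
    exact h3.le
  rw [h0] at this
  simp only [nonpos_iff_eq_zero, ENNReal.ofReal_eq_zero] at this
  linarith

lemma exists_dd_gt (f : ℝ → ℝ) {t : ℝ} (ht : t < 1) :
    ∃ s₀ : ℝ, ENNReal.ofReal t < dd f s₀ := by
  have hmono : Monotone (fun n : ℕ => {u : ℝ | (-(n:ℝ)) < f u}) := by
    intro m n hmn u hu
    simp only [mem_setOf_eq] at hu ⊢
    have : (-(n:ℝ)) ≤ -(m:ℝ) := by
      simp only [neg_le_neg_iff]
      exact_mod_cast hmn
    linarith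
  have hun : (⋃ n : ℕ, {u : ℝ | (-(n:ℝ)) < f u}) = univ := by
    ext u
    simp only [mem_iUnion, mem_setOf_eq, mem_univ, iff_true]
    obtain ⟨n, hn⟩ := exists_nat_gt (-(f u))
    exact ⟨n, by linarith⟩
  have h1 : (⨆ n : ℕ, nu {u : ℝ | (-(n:ℝ)) < f u}) = 1 := by
    rw [← Monotone.measure_iUnion hmono, hun, nu_univ]
  have h2 : ENNReal.ofReal t < ⨆ n : ℕ, nu {u : ℝ | (-(n:ℝ)) < f u} := by
    rw [h1]
    exact ENNReal.ofReal_lt_one.mpr ht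
  obtain ⟨n, hn⟩ := lt_iSup_iff.mp h2
  exact ⟨-(n:ℝ), by rwa [dd_eq]⟩

lemma bddBelow_SS (f : ℝ → ℝ) {t : ℝ} (ht : t < 1) :
    BddBelow {s | dd f s ≤ ENNReal.ofReal t} := by
  obtain ⟨s₀, hs₀⟩ := exists_dd_gt f ht
  refine ⟨s₀, fun s hs => ?_⟩
  by_contra hlt
  push_neg at hlt
  exact absurd (lt_of_lt_of_le hs₀ ((dd_anti f hlt.le).trans hs)) (lt_irrefl _)

/-- The key Galois connection. -/
lemma rr_le_iff (hf : Measurable f) {t s : ℝ} (ht : t ∈ Ioo (0:ℝ) 1) :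
    rr f t ≤ s ↔ dd f s ≤ ENNReal.ofReal t := by
  constructor
  · intro h
    have key : ∀ n : ℕ, dd f (s + 1/(n+1)) ≤ ENNReal.ofReal t := by
      intro n
      obtain ⟨a, ha, halt⟩ := Real.lt_sInf_add_pos (s := {s | dd f s ≤ ENNReal.ofReal t})
        (SS_nonempty hf ht.1) (by positivity : (0:ℝ) < 1/((n:ℝ)+1))
      rw [← rr_eq] at halt
      exact le_trans (dd_anti f (by linarith : a ≤ s + 1/(n+1))) ha
    have hset : {u : ℝ | s < f u} = ⋃ n : ℕ, {u : ℝ | s + 1/(n+1) < f u} := by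
      ext u
      simp only [mem_setOf_eq, mem_iUnion]
      constructor
      · intro hu
        obtain ⟨n, hn⟩ := exists_nat_one_div_lt (by linarith : 0 < f u - s)
        exact ⟨n, by push_cast at hn ⊢; linarith⟩
      · rintro ⟨n, hn⟩
        have : (0:ℝ) < 1/(n+1) := by positivity
        linarith
    have hmono : Monotone (fun n : ℕ => {u : ℝ | s + 1/(n+1) < f u}) := by
      intro m n hmn u hu
      simp only [mem_setOf_eq] at hu ⊢
      have h1 : (1:ℝ)/(n+1) ≤ 1/(m+1) := by
        apply one_div_le_one_div_of_le
        · positivity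
        · push_cast; exact_mod_cast by exact_mod_cast add_le_add_left (Nat.cast_le.mpr hmn) 1
      linarith
    rw [dd_eq, hset, Monotone.measure_iUnion hmono]
    apply iSup_le
    intro n
    rw [← dd_eq]
    exact key n
  · intro h
    exact csInf_le (bddBelow_SS f ht.2) h

lemma dd_rr_le (hf : Measurable f) {t : ℝ} (ht : t ∈ Ioo (0:ℝ) 1) :
    dd f (rr f t) ≤ ENNReal.ofReal t := (rr_le_iff hf ht).mp le_rfl

lemma rr_antitoneOn (hf : Measurable f) : AntitoneOn (rr f) (Ioo (0:ℝ) 1) := by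
  intro t ht t' ht' htt'
  rw [rr_le_iff hf ht']
  exact le_trans (dd_rr_le hf ht) (ENNReal.ofReal_le_ofReal htt')

end L2

namespace L3

open RRAux L2

variable {f : ℝ → ℝ}

lemma superlevel (hf : Measurable f) (s : ℝ) :
    {t ∈ Ioo (0:ℝ) 1 | s < rr f t} = Ioo (0:ℝ) ((dd f s).toReal) := by
  have htoReal_le : (dd f s).toReal ≤ 1 := by
    rw [← ENNReal.toReal_one]
    exact ENNReal.toReal_mono ENNReal.one_ne_top (dd_le_one f s)
  ext t
  simp only [mem_setOf_eq, mem_Ioo]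
  constructor
  · rintro ⟨⟨ht0, ht1⟩, hst⟩
    refine ⟨ht0, ?_⟩
    have : ¬ (rr f t ≤ s) := not_le.mpr hst
    rw [rr_le_iff hf ⟨ht0, ht1⟩] at this
    push_neg at this
    exact (ENNReal.ofReal_lt_iff_lt_toReal ht0.le (dd_ne_top f s)).mp this
  · rintro ⟨ht0, htd⟩
    have ht1 : t < 1 := lt_of_lt_of_le htd htoReal_le
    refine ⟨⟨ht0, ht1⟩, ?_⟩
    by_contra hle
    push_neg at hle
    rw [rr_le_iff hf ⟨ht0, ht1⟩] at hle
    have := (ENNReal.ofReal_lt_iff_lt_toReal ht0.le (dd_ne_top f s)).mpr htd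
    exact absurd (lt_of_lt_of_le this hle) (lt_irrefl _)

lemma nu_superlevel (hf : Measurable f) (s : ℝ) :
    nu {t | s < rr f t} = dd f s := by
  rw [nu, Measure.restrict_apply' measurableSet_Ioo]
  have : {t | s < rr f t} ∩ Ioo (0:ℝ) 1 = {t ∈ Ioo (0:ℝ) 1 | s < rr f t} := by
    ext t; simp [and_comm]
  rw [this, superlevel hf s, Real.volume_Ioo]
  have h0 : (0:ℝ) ≤ (dd f s).toReal := ENNReal.toReal_nonneg
  rw [sub_zero, ENNReal.ofReal_toReal (dd_ne_top f s)]

lemma rr_aemeasurable (hf : Measurable f) : AEMeasurable (rr f) nu :=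
  aemeasurable_restrict_of_antitoneOn measurableSet_Ioo (rr_antitoneOn hf)

lemma map_rr_eq (hf : Measurable f) :
    Measure.map (rr f) nu = Measure.map f nu := by
  refine MeasureTheory.Measure.ext_of_Iic _ _ (fun a => ?_)
  rw [Measure.map_apply₀ (rr_aemeasurable hf) measurableSet_Iic.nullMeasurableSet,
    Measure.map_apply hf measurableSet_Iic]
  have h1 : (rr f ⁻¹' Iic a) = {t | a < rr f t}ᶜ := by
    ext t; simp [not_lt]
  have h2 : (f ⁻¹' Iic a) = {u | a < f u}ᶜ := by
    ext u; simp [not_lt]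
  rw [h1, h2]
  have hnm1 : NullMeasurableSet {t | a < rr f t} nu :=
    (rr_aemeasurable hf).nullMeasurable measurableSet_Ioi
  have hnm2 : NullMeasurableSet {u | a < f u} nu :=
    (hf measurableSet_Ioi).nullMeasurableSet
  rw [measure_compl₀ hnm1 (measure_ne_top nu _), measure_compl₀ hnm2 (measure_ne_top nu _),
    nu_superlevel hf a, ← dd_eq]

lemma integrable_rr (hf : Measurable f) (hfi : IntegrableOn f (Ioo (0:ℝ) 1)) :
    Integrable (rr f) nu := by
  have hfi' : Integrable f nu := hfi
  constructor
  · exact (rr_aemeasurable hf).aestronglyMeasurable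
  · have hg : Measurable (fun v : ℝ => (‖v‖₊ : ENNReal)) :=
      measurable_nnnorm.coe_nnreal_ennreal
    have key : ∫⁻ t, (‖rr f t‖₊ : ENNReal) ∂nu = ∫⁻ u, (‖f u‖₊ : ENNReal) ∂nu := by
      rw [← lintegral_map' hg.aemeasurable (rr_aemeasurable hf), map_rr_eq hf,
        lintegral_map' hg.aemeasurable hf.aemeasurable]
    change ∫⁻ t, (‖rr f t‖₊ : ENNReal) ∂nu < ⊤; rw [key]
    exact hfi'.2

lemma integral_comp_eq (hf : Measurable f) {G : ℝ → ℝ} (hG : Continuous G) :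
    ∫ t, G (rr f t) ∂nu = ∫ u, G (f u) ∂nu := by
  rw [← integral_map (rr_aemeasurable hf) hG.aestronglyMeasurable,
    ← integral_map hf.aemeasurable hG.aestronglyMeasurable, map_rr_eq hf]

end L3

namespace L4

open RRAux L2 L3

variable {f : ℝ → ℝ}

lemma dd_comp (f : ℝ → ℝ) (φ : ℝ ≃o ℝ) (s : ℝ) :
    dd (fun u => φ (f u)) s = dd f (φ.symm s) := by
  unfold dd
  congr 1
  ext u
  simp only [mem_setOf_eq, mem_Ioo]
  constructor
  · rintro ⟨h1, h2⟩
    exact ⟨h1, by rw [← φ.lt_iff_lt, φ.apply_symm_apply]; exact h2⟩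
  · rintro ⟨h1, h2⟩
    exact ⟨h1, by rw [← φ.lt_iff_lt, φ.apply_symm_apply] at h2; exact h2⟩

lemma rr_comp (hf : Measurable f) (φ : ℝ ≃o ℝ) {t : ℝ} (ht : t ∈ Ioo (0:ℝ) 1) :
    rr (fun u => φ (f u)) t = φ (rr f t) := by
  rw [rr_eq, rr_eq]
  have hset : {s | dd (fun u => φ (f u)) s ≤ ENNReal.ofReal t}
      = φ '' {s | dd f s ≤ ENNReal.ofReal t} := by
    ext s
    simp only [mem_setOf_eq, dd_comp f φ s]
    constructor
    · intro h
      exact ⟨φ.symm s, h, φ.apply_symm_apply s⟩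
    · rintro ⟨a, ha, rfl⟩
      rwa [φ.symm_apply_apply]
  rw [hset]
  exact (OrderIso.map_csInf' φ (SS_nonempty hf ht.1) (bddBelow_SS f ht.2)).symm

end L4

namespace L5

open RRAux L2 L3 L4

noncomputable def hat (p q v : ℝ) : ℝ := max (min (v - p) (q - v)) 0

lemma hat_nonneg (p q v : ℝ) : 0 ≤ hat p q v := le_max_right _ _

lemma hat_continuous (p q : ℝ) : Continuous (hat p q) := by
  unfold hat
  fun_prop

lemma hat_zero_left {p q v : ℝ} (h : v ≤ p) : hat p q v = 0 := by
  unfold hat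
  rw [max_eq_right]
  exact le_trans (min_le_left _ _) (by linarith)

lemma hat_zero_right {p q v : ℝ} (h : q ≤ v) : hat p q v = 0 := by
  unfold hat
  rw [max_eq_right]
  exact le_trans (min_le_right _ _) (by linarith)

lemma hat_pos {p q v : ℝ} (h1 : p < v) (h2 : v < q) : 0 < hat p q v := by
  unfold hat
  rw [max_eq_left]
  · exact lt_min (by linarith) (by linarith)
  · exact le_of_lt (lt_min (by linarith) (by linarith))

lemma hat_le {p q : ℝ} (hpq : p ≤ q) (v : ℝ) : hat p q v ≤ q - p := by
  unfold hat
  rcases le_or_gt (min (v - p) (q - v)) 0 with h | h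
  · rw [max_eq_right h]; linarith
  · rw [max_eq_left h.le]
    rcases le_or_gt v q with h2 | h2
    · exact le_trans (min_le_left _ _) (by linarith)
    · exfalso
      have := min_le_right (v - p) (q - v)
      linarith

lemma hat_lip (p q a b : ℝ) : |hat p q a - hat p q b| ≤ |a - b| := by
  unfold hat
  refine le_trans (abs_max_sub_max_le_abs _ _ _) ?_
  refine le_trans (abs_min_sub_min_le_max _ _ _ _) ?_
  apply max_le
  · apply le_of_eq; congr 1; ring
  · have : q - a - (q - b) = -(a - b) := by ring
    rw [this, abs_neg]

lemma ge_hat {p q v : ℝ} {p' q' : ℝ} (h1 : p < p') (h2 : q' < q) (hv1 : p' < v) (hv2 : v ≤ q') :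
    min (p' - p) (q - q') ≤ hat p q v := by
  unfold hat
  refine le_trans ?_ (le_max_left _ _)
  apply le_min
  · exact le_trans (min_le_left _ _) (by linarith)
  · exact le_trans (min_le_right _ _) (by linarith)

lemma exists_phiIso (g : ℝ → ℝ) (hg : Continuous g) (L δ c₁ c₂ : ℝ)
    (hlip : ∀ a b : ℝ, |g a - g b| ≤ L * |a - b|)
    (hδ : 0 < δ) (hδL : δ * L < 1)
    (hsupp : ∀ v : ℝ, v ≤ c₁ ∨ c₂ ≤ v → g v = 0) :
    ∃ φ : ℝ ≃o ℝ, ∀ v, φ v = v + δ * g v := by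
  set F : ℝ → ℝ := fun v => v + δ * g v with hF
  have hmono : StrictMono F := by
    intro a b hab
    have h1 : |g a - g b| ≤ L * |a - b| := hlip a b
    have h2 : |a - b| = b - a := by rw [abs_sub_comm]; exact abs_of_pos (by linarith)
    rw [h2] at h1
    have h3 := abs_le.mp h1
    have hL : 0 ≤ L * (b - a) := le_trans (abs_nonneg _) h1
    simp only [hF]
    nlinarith [h3.1, h3.2]
  have hcont : Continuous F := by fun_prop
  have htop : Filter.Tendsto F Filter.atTop Filter.atTop := by
    refine Filter.Tendsto.congr' ?_ Filter.tendsto_id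
    filter_upwards [Filter.eventually_ge_atTop c₂] with v hv
    simp [hF, hsupp v (Or.inr hv)]
  have hbot : Filter.Tendsto F Filter.atBot Filter.atBot := by
    refine Filter.Tendsto.congr' ?_ Filter.tendsto_id
    filter_upwards [Filter.eventually_le_atBot c₁] with v hv
    simp [hF, hsupp v (Or.inl hv)]
  have hsurj : Function.Surjective F := hcont.surjective htop hbot
  exact ⟨StrictMono.orderIsoOfSurjective F hmono hsurj, fun v => rfl⟩

lemma integrable_comp {f G : ℝ → ℝ} (hfa : AEMeasurable f nu) (hG : Continuous G)
    {C : ℝ} (hC : ∀ v, |G v| ≤ C) : Integrable (fun u => G (f u)) nu := by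
  refine Integrable.mono' (integrable_const C) (hG.aemeasurable.comp_aemeasurable hfa).aestronglyMeasurable ?_
  filter_upwards with u
  exact hC (f u)

end L5


namespace Main

open RRAux L2 L3 L4 L5

variable {x : ℝ → ℝ}

/-- If the image of `rr x` on `(t, c)` is finite, `rr x` is constant on `[t, u₀]` for some
`u₀ > t`. -/
lemma step_finite (hxm : Measurable x) {t c : ℝ} (ht : t ∈ Ioo (0:ℝ) 1) (htc : t < c)
    (hc1 : c ≤ 1) (hfin : (rr x '' Ioo t c).Finite) :
    ∃ ε > 0, ∀ u ∈ Ico t (t + ε), rr x u = rr x t := by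
  have hVne : (rr x '' Ioo t c).Nonempty :=
    ⟨rr x ((t+c)/2), ⟨(t+c)/2, ⟨by linarith, by linarith⟩, rfl⟩⟩
  -- maximal element of the image
  obtain ⟨vmax, hvmem, hvmax⟩ : ∃ v ∈ rr x '' Ioo t c, ∀ w ∈ rr x '' Ioo t c, w ≤ v := by
    classical
    refine ⟨hfin.toFinset.max' (by simpa using hVne), ?_, ?_⟩
    · have := hfin.toFinset.max'_mem (by simpa using hVne)
      simpa using this
    · intro w hw
      exact hfin.toFinset.le_max' w (by simpa using hw)
  obtain ⟨u₀, hu₀, hu₀v⟩ := hvmem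
  have hu₀I : u₀ ∈ Ioo (0:ℝ) 1 := ⟨lt_trans ht.1 hu₀.1, lt_of_lt_of_le hu₀.2 hc1⟩
  have hconst : ∀ u ∈ Ioc t u₀, rr x u = vmax := by
    intro u hu
    have huI : u ∈ Ioo (0:ℝ) 1 := ⟨lt_trans ht.1 hu.1, lt_of_le_of_lt hu.2 hu₀I.2⟩
    have h1 : rr x u ≤ vmax := hvmax _ ⟨u, ⟨hu.1, lt_of_le_of_lt hu.2 hu₀.2⟩, rfl⟩
    have h2 : vmax ≤ rr x u := by
      rw [← hu₀v]
      exact rr_antitoneOn hxm huI hu₀I hu.2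
    linarith
  have hle : rr x t ≤ vmax := by
    rw [rr_le_iff hxm ht]
    by_contra hlt
    push_neg at hlt
    have htoR : t < (dd x vmax).toReal :=
      (ENNReal.ofReal_lt_iff_lt_toReal ht.1.le (dd_ne_top x vmax)).mp hlt
    set u := min u₀ ((t + (dd x vmax).toReal)/2) with hu
    have hut : t < u := lt_min hu₀.1 (by linarith)
    have huu₀ : u ≤ u₀ := min_le_left _ _
    have huI : u ∈ Ioo (0:ℝ) 1 := ⟨lt_trans ht.1 hut, lt_of_le_of_lt huu₀ hu₀I.2⟩
    have hdle : dd x vmax ≤ ENNReal.ofReal u := by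
      rw [← rr_le_iff hxm huI, hconst u ⟨hut, huu₀⟩]
    have hulV : u < (dd x vmax).toReal :=
      lt_of_le_of_lt (min_le_right _ _) (by linarith)
    have : ENNReal.ofReal u < dd x vmax :=
      (ENNReal.ofReal_lt_iff_lt_toReal (le_of_lt (lt_trans ht.1 hut)) (dd_ne_top x vmax)).mpr hulV
    exact absurd (lt_of_lt_of_le this hdle) (lt_irrefl _)
  have hge : vmax ≤ rr x t := by
    rw [← hu₀v]
    exact rr_antitoneOn hxm ht hu₀I hu₀.1.le
  have hrrt : rr x t = vmax := le_antisymm hle hge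
  refine ⟨u₀ - t, by have := hu₀.1; linarith, fun u hu => ?_⟩
  rcases eq_or_lt_of_le hu.1 with h | h
  · rw [← h]
  · rw [hrrt, hconst u ⟨h, by have := hu.2; linarith⟩]

/-- Positivity of the measure of a value window. -/
lemma window_pos (hxm : Measurable x) {b p' q' : ℝ} (hb : b ∈ Ioo (0:ℝ) 1)
    (h1 : p' < rr x b) (h2 : rr x b ≤ q') :
    0 < nu ({u | p' < x u} \ {u | q' < x u}) := by
  have hsub : {u : ℝ | q' < x u} ⊆ {u : ℝ | p' < x u} := by
    intro u hu
    simp only [mem_setOf_eq] at hu ⊢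
    linarith
  rw [measure_diff hsub ((hxm measurableSet_Ioi).nullMeasurableSet) (measure_ne_top nu _)]
  rw [← dd_eq, ← dd_eq]
  have hq : dd x q' ≤ ENNReal.ofReal b := by rw [← rr_le_iff hxm hb]; exact h2
  have hp : ENNReal.ofReal b < dd x p' := by
    by_contra hcon
    push_neg at hcon
    rw [← rr_le_iff hxm hb] at hcon
    linarith
  exact tsub_pos_iff_lt.mpr (lt_of_le_of_lt hq hp)

/-- Positivity of the integral of a hat function composed with `x`. -/
lemma hat_integral_pos (hxm : Measurable x) {b p p' q' q : ℝ} (hb : b ∈ Ioo (0:ℝ) 1)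
    (hpp' : p < p') (hq'q : q' < q) (h1 : p' < rr x b) (h2 : rr x b ≤ q') :
    0 < ∫ u, hat p q (x u) ∂nu := by
  have hpq : p < q := by linarith [h1, h2]
  have hint : Integrable (fun u => hat p q (x u)) nu := by
    refine integrable_comp hxm.aemeasurable (hat_continuous p q) (C := q - p) ?_
    intro v
    rw [abs_of_nonneg (hat_nonneg p q v)]
    exact hat_le hpq.le v
  set E := {u : ℝ | p' < x u} \ {u : ℝ | q' < x u} with hE
  have hEmeas : MeasurableSet E :=
    (hxm measurableSet_Ioi).diff (hxm measurableSet_Ioi)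
  have hEpos := window_pos hxm hb h1 h2
  set cmin := min (p' - p) (q - q') with hcmin
  have hcminpos : 0 < cmin := lt_min (by linarith) (by linarith)
  have hlow : cmin * (nu E).toReal ≤ ∫ u in E, hat p q (x u) ∂nu := by
    refine setIntegral_ge_of_const_le_real hEmeas (measure_ne_top nu _) ?_ hint.integrableOn
    intro u hu
    obtain ⟨hu1, hu2⟩ := hu
    simp only [mem_setOf_eq] at hu1 hu2
    push_neg at hu2
    exact ge_hat hpp' hq'q hu1 hu2
  have hup : ∫ u in E, hat p q (x u) ∂nu ≤ ∫ u, hat p q (x u) ∂nu := by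
    refine setIntegral_le_integral hint ?_
    filter_upwards with u
    exact hat_nonneg p q (x u)
  have : 0 < cmin * (nu E).toReal := by
    apply mul_pos hcminpos
    exact ENNReal.toReal_pos hEpos.ne' (measure_ne_top nu _)
  linarith

end Main

namespace Key

open RRAux L2 L3 L4 L5 Main

set_option maxHeartbeats 1000000 in
lemma exists_const_right (y x : ℝ → ℝ)
    (hxm : Measurable x)
    (hxi : IntegrableOn x (Ioo (0:ℝ) 1))
    (hrry : Integrable (rr y) nu)
    (hMaj : Maj x y)
    (hext : ∀ x₁ ∈ Omega y, ∀ x₂ ∈ Omega y,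
      (∀ᵐ u ∂(volume.restrict (Ioo (0:ℝ) 1)), x u = (x₁ u + x₂ u) / 2) →
      (∀ᵐ u ∂(volume.restrict (Ioo (0:ℝ) 1)), x₁ u = x₂ u))
    {t₁ t₂ : ℝ} (ht₁ : 0 ≤ t₁) (ht₂ : t₂ ≤ 1)
    (hstrict : ∀ s ∈ Ioo t₁ t₂,
      (∫ τ in Ioo (0:ℝ) s, rr x τ) < ∫ τ in Ioo (0:ℝ) s, rr y τ)
    {t : ℝ} (htm : t ∈ Ioo t₁ t₂) :
    ∃ ε > 0, ∀ u ∈ Ico t (t + ε), rr x u = rr x t := by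
  classical
  have ht0 : 0 < t := lt_of_le_of_lt ht₁ htm.1
  have ht1 : t < 1 := lt_of_lt_of_le htm.2 ht₂
  have htI : t ∈ Ioo (0:ℝ) 1 := ⟨ht0, ht1⟩
  set c : ℝ := (t + t₂)/2 with hc
  have htc : t < c := by rw [hc]; have := htm.2; linarith
  have hct₂ : c < t₂ := by rw [hc]; have := htm.2; linarith
  have hc1 : c ≤ 1 := by linarith
  by_contra hcon
  push_neg at hcon
  -- Step A : the image of `rr x` on `(t,c)` is infinite
  have hinf : (rr x '' Ioo t c).Infinite := by
    by_contra hfin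
    rw [Set.not_infinite] at hfin
    obtain ⟨ε, hε, hconst⟩ := step_finite hxm htI htc hc1 hfin
    obtain ⟨u, hu, hne⟩ := hcon ε hε
    exact hne (hconst u hu)
  -- pick five distinct values, sorted increasingly
  obtain ⟨F, hFV, hFcard⟩ := Set.Infinite.exists_subset_card_eq hinf 5
  set l : List ℝ := F.sort (· ≤ ·) with hl
  have hlen : l.length = 5 := by rw [hl, Finset.length_sort, hFcard]
  have hsorted : List.Pairwise (· < ·) l := (Finset.sortedLT_sort F).pairwise
  set v : Fin 5 → ℝ := fun i => l.get (Fin.cast hlen.symm i) with hv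
  have hvmono : ∀ i j : Fin 5, i < j → v i < v j := by
    intro i j hij
    exact hsorted.rel_get_of_lt (by simpa using hij)
  have hvmem : ∀ i : Fin 5, v i ∈ rr x '' Ioo t c := by
    intro i
    have hml : v i ∈ l := List.get_mem l _
    rw [hl, Finset.mem_sort] at hml
    exact hFV (Finset.mem_coe.mpr hml)
  choose b hbmem hbrr using fun i : Fin 5 => hvmem i
  have hbI : ∀ i, b i ∈ Ioo (0:ℝ) 1 :=
    fun i => ⟨lt_trans ht0 (hbmem i).1, lt_of_lt_of_le (hbmem i).2 hc1⟩
  have hbanti : ∀ i j : Fin 5, i < j → b j < b i := by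
    intro i j hij
    by_contra hle
    push_neg at hle
    have := rr_antitoneOn hxm (hbI i) (hbI j) hle
    rw [hbrr i, hbrr j] at this
    exact absurd (hvmono i j hij) (not_lt.mpr this)
  -- windows
  set pp : ℝ := (v 2 + v 3)/2 with hpp
  set qp : ℝ := (v 3 + v 4)/2 with hqp
  set pm : ℝ := (v 0 + v 1)/2 with hpm
  set qm : ℝ := (v 1 + v 2)/2 with hqm
  have h01 : v 0 < v 1 := hvmono 0 1 (by decide)
  have h12 : v 1 < v 2 := hvmono 1 2 (by decide)
  have h23 : v 2 < v 3 := hvmono 2 3 (by decide)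
  have h34 : v 3 < v 4 := hvmono 3 4 (by decide)
  set P : ℝ := ∫ u, hat pp qp (x u) ∂nu with hPdef
  set N : ℝ := ∫ u, hat pm qm (x u) ∂nu with hNdef
  have hP : 0 < P := by
    rw [hPdef]
    refine hat_integral_pos hxm (b := b 3) (p' := (pp + v 3)/2) (q' := (v 3 + qp)/2)
      (hbI 3) ?_ ?_ ?_ ?_
    · rw [hpp]; linarith
    · rw [hqp]; linarith
    · rw [hbrr 3, hpp]; linarith
    · rw [hbrr 3, hqp]; linarith
  have hN : 0 < N := by
    rw [hNdef]
    refine hat_integral_pos hxm (b := b 1) (p' := (pm + v 1)/2) (q' := (v 1 + qm)/2)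
      (hbI 1) ?_ ?_ ?_ ?_
    · rw [hpm]; linarith
    · rw [hqm]; linarith
    · rw [hbrr 1, hpm]; linarith
    · rw [hbrr 1, hqm]; linarith
  -- the perturbation g
  set g : ℝ → ℝ := fun w => N * hat pp qp w - P * hat pm qm w with hg
  have hppqp : pp < qp := by rw [hpp, hqp]; linarith
  have hpmqm : pm < qm := by rw [hpm, hqm]; linarith
  have hqmpp : qm < pp := by rw [hqm, hpp]; linarith
  have hgcont : Continuous g := by
    rw [hg]
    exact (continuous_const.mul (hat_continuous pp qp)).sub
      (continuous_const.mul (hat_continuous pm qm))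
  set Bg : ℝ := N * (qp - pp) + P * (qm - pm) with hBg
  have hgw : ∀ w, g w = N * hat pp qp w - P * hat pm qm w := fun _ => rfl
  have hgbound : ∀ w, |g w| ≤ Bg := by
    intro w
    rw [hgw, hBg]
    have h1 := hat_nonneg pp qp w
    have h2 := hat_nonneg pm qm w
    have h3 := hat_le hppqp.le w
    have h4 := hat_le hpmqm.le w
    rw [abs_le]
    constructor <;> nlinarith
  have hglip : ∀ a b' : ℝ, |g a - g b'| ≤ (N + P) * |a - b'| := by
    intro a b'
    have e1 : g a - g b' = N * (hat pp qp a - hat pp qp b') - P * (hat pm qm a - hat pm qm b') := by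
      rw [hgw, hgw]; ring
    rw [e1]
    refine le_trans (abs_sub _ _) ?_
    rw [abs_mul, abs_mul, abs_of_pos hN, abs_of_pos hP]
    have l1 := hat_lip pp qp a b'
    have l2 := hat_lip pm qm a b'
    nlinarith
  have hgsupp : ∀ w : ℝ, w ≤ pm ∨ qp ≤ w → g w = 0 := by
    intro w hw
    rw [hgw]
    rcases hw with hw | hw
    · rw [hat_zero_left hw, hat_zero_left (le_trans hw (by linarith))]
      ring
    · rw [hat_zero_right hw, hat_zero_right (le_trans (by linarith : qm ≤ w) le_rfl)]
      ring
  have hgz_hi : ∀ w : ℝ, v 4 ≤ w → g w = 0 := by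
    intro w hw
    refine hgsupp w (Or.inr ?_)
    rw [hqp]; linarith
  have hgz_lo : ∀ w : ℝ, w ≤ v 0 → g w = 0 := by
    intro w hw
    refine hgsupp w (Or.inl ?_)
    rw [hpm]; linarith
  have hhatp_int : Integrable (fun u => hat pp qp (x u)) nu := by
    refine integrable_comp hxm.aemeasurable (hat_continuous pp qp) (C := qp - pp) ?_
    intro w; rw [abs_of_nonneg (hat_nonneg _ _ _)]; exact hat_le hppqp.le w
  have hhatm_int : Integrable (fun u => hat pm qm (x u)) nu := by
    refine integrable_comp hxm.aemeasurable (hat_continuous pm qm) (C := qm - pm) ?_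
    intro w; rw [abs_of_nonneg (hat_nonneg _ _ _)]; exact hat_le hpmqm.le w
  have hgzero_int : ∫ u, g (x u) ∂nu = 0 := by
    simp only [hgw]
    rw [integral_sub (hhatp_int.const_mul N) (hhatm_int.const_mul P),
      integral_const_mul, integral_const_mul, ← hPdef, ← hNdef]
    ring
  -- the deficit function Δ
  have hrrx_int : Integrable (rr x) nu := integrable_rr hxm hxi
  have hnu_def : nu = volume.restrict (Ioo (0:ℝ) 1) := rfl
  set w : ℝ → ℝ := (Ioo (0:ℝ) 1).indicator (fun τ => rr y τ - rr x τ) with hwdef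
  have hsub_int : IntegrableOn (fun τ => rr y τ - rr x τ) (Ioo (0:ℝ) 1) volume := by
    rw [IntegrableOn, ← hnu_def]
    exact hrry.sub hrrx_int
  have hw_int : Integrable w volume := by
    rw [hwdef]
    exact hsub_int.integrable_indicator measurableSet_Ioo
  set Δ : ℝ → ℝ := fun s => ∫ τ in (0:ℝ)..s, w τ with hΔdef
  have hΔcont : Continuous Δ :=
    intervalIntegral.continuous_primitive (fun a b' => hw_int.intervalIntegrable) 0
  have hrrx_int_s : ∀ s : ℝ, s ≤ 1 → IntegrableOn (rr x) (Ioo (0:ℝ) s) volume := by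
    intro s hs
    have : IntegrableOn (rr x) (Ioo (0:ℝ) 1) volume := by rw [IntegrableOn, ← hnu_def]; exact hrrx_int
    exact this.mono_set (Ioo_subset_Ioo_right hs)
  have hrry_int_s : ∀ s : ℝ, s ≤ 1 → IntegrableOn (rr y) (Ioo (0:ℝ) s) volume := by
    intro s hs
    have : IntegrableOn (rr y) (Ioo (0:ℝ) 1) volume := by rw [IntegrableOn, ← hnu_def]; exact hrry
    exact this.mono_set (Ioo_subset_Ioo_right hs)
  have hΔeq : ∀ s : ℝ, 0 ≤ s → s ≤ 1 →
      Δ s = (∫ τ in Ioo (0:ℝ) s, rr y τ) - ∫ τ in Ioo (0:ℝ) s, rr x τ := by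
    intro s h0s hs1
    rw [hΔdef]
    simp only
    rw [intervalIntegral.integral_of_le h0s, integral_Ioc_eq_integral_Ioo]
    have hcong : ∫ τ in Ioo (0:ℝ) s, w τ = ∫ τ in Ioo (0:ℝ) s, (rr y τ - rr x τ) := by
      refine setIntegral_congr_fun measurableSet_Ioo (fun τ hτ => ?_)
      rw [hwdef]
      have hmem : τ ∈ Ioo (0:ℝ) 1 := ⟨hτ.1, lt_of_lt_of_le hτ.2 hs1⟩
      exact indicator_of_mem hmem _
    rw [hcong, integral_sub (hrry_int_s s hs1) (hrrx_int_s s hs1)]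
  have hb40 : b 4 < b 0 := hbanti 0 4 (by decide)
  have hIccsub : Icc (b 4) (b 0) ⊆ Ioo t₁ t₂ := by
    intro s hs
    exact ⟨lt_of_lt_of_le (lt_trans htm.1 (hbmem 4).1) hs.1,
      lt_of_le_of_lt hs.2 (lt_trans (hbmem 0).2 hct₂)⟩
  have hb4I := hbI 4
  have hb0I := hbI 0
  have hΔpos : ∀ s ∈ Icc (b 4) (b 0), 0 < Δ s := by
    intro s hs
    have hsI := hIccsub hs
    have h0s : 0 ≤ s := le_trans hb4I.1.le hs.1
    have hs1 : s ≤ 1 := le_trans hs.2 hb0I.2.le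
    rw [hΔeq s h0s hs1]
    have := hstrict s hsI
    linarith
  obtain ⟨sm, hsmmem, hsmmin⟩ :=
    isCompact_Icc.exists_isMinOn (nonempty_Icc.mpr hb40.le) hΔcont.continuousOn
  set η : ℝ := Δ sm with hη
  have hηpos : 0 < η := hΔpos sm hsmmem
  have hηle : ∀ s ∈ Icc (b 4) (b 0), η ≤ Δ s := fun s hs => hsmmin hs
  -- the perturbation size δ
  set M : ℝ := ∫ τ, |g (rr x τ)| ∂nu with hM
  have hgrr_int : Integrable (fun τ => g (rr x τ)) nu :=
    integrable_comp (rr_aemeasurable hxm) hgcont hgbound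
  have habs_int : Integrable (fun τ => |g (rr x τ)|) nu := hgrr_int.abs
  have hM0 : 0 ≤ M := by
    rw [hM]
    exact integral_nonneg (fun τ => abs_nonneg _)
  set δ : ℝ := min (η / (2*(M+1))) (1/(2*((N+P)+1))) with hδ
  have hδpos : 0 < δ := by
    apply lt_min
    · positivity
    · positivity
  have hNP0 : 0 < N + P := by linarith
  have hδL : δ * (N + P) < 1 := by
    have h1 : δ ≤ 1/(2*((N+P)+1)) := min_le_right _ _
    have h2 : δ * (N+P) ≤ (1/(2*((N+P)+1))) * (N+P) :=
      mul_le_mul_of_nonneg_right h1 hNP0.le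
    have h3 : (1/(2*((N+P)+1))) * (N+P) < 1 := by
      rw [div_mul_eq_mul_div, div_lt_one (by positivity)]
      nlinarith
    linarith
  have hδM : δ * M < η := by
    have h1 : δ ≤ η / (2*(M+1)) := min_le_left _ _
    have h2 : δ * M ≤ (η / (2*(M+1))) * M := mul_le_mul_of_nonneg_right h1 hM0
    have h3 : (η / (2*(M+1))) * M < η := by
      rw [div_mul_eq_mul_div, div_lt_iff₀ (by positivity)]
      nlinarith
    linarith
  -- the two order isomorphisms
  obtain ⟨φp, hφp⟩ := exists_phiIso g hgcont (N+P) δ pm qp hglip hδpos hδL hgsupp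
  obtain ⟨φm, hφm⟩ := exists_phiIso (fun w' => -g w') (by fun_prop) (N+P) δ pm qp
    (fun a b' => by
      have h := hglip a b'
      have e : (-g a) - (-g b') = -(g a - g b') := by ring
      rw [e, abs_neg]
      exact h)
    hδpos hδL (fun w' hw' => by simp [hgsupp w' hw'])
  -- the two perturbed functions
  set x₁ : ℝ → ℝ := fun u => x u + δ * g (x u) with hx₁def
  set x₂ : ℝ → ℝ := fun u => x u - δ * g (x u) with hx₂def
  have hx₁phi : x₁ = fun u => φp (x u) := by
    funext u
    rw [hφp (x u)]
  have hx₂phi : x₂ = fun u => φm (x u) := by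
    funext u
    rw [hφm (x u)]
    show x u - δ * g (x u) = x u + δ * (-g (x u))
    ring
  have hrr1 : ∀ τ ∈ Ioo (0:ℝ) 1, rr x₁ τ = rr x τ + δ * g (rr x τ) := by
    intro τ hτ
    rw [hx₁phi, rr_comp hxm φp hτ, hφp]
  have hrr2 : ∀ τ ∈ Ioo (0:ℝ) 1, rr x₂ τ = rr x τ - δ * g (rr x τ) := by
    intro τ hτ
    rw [hx₂phi, rr_comp hxm φm hτ, hφm]
    ring
  -- the correction term H
  set H : ℝ → ℝ := fun s => ∫ τ in Ioo (0:ℝ) s, g (rr x τ) with hH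
  have hgrr_int_s : ∀ s : ℝ, s ≤ 1 → IntegrableOn (fun τ => g (rr x τ)) (Ioo (0:ℝ) s) volume := by
    intro s hs
    have : IntegrableOn (fun τ => g (rr x τ)) (Ioo (0:ℝ) 1) volume := by
      rw [IntegrableOn, ← hnu_def]; exact hgrr_int
    exact this.mono_set (Ioo_subset_Ioo_right hs)
  have hI1 : ∀ s : ℝ, 0 ≤ s → s ≤ 1 →
      (∫ τ in Ioo (0:ℝ) s, rr x₁ τ) = (∫ τ in Ioo (0:ℝ) s, rr x τ) + δ * H s := by
    intro s h0s hs1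
    have hcong : ∫ τ in Ioo (0:ℝ) s, rr x₁ τ
        = ∫ τ in Ioo (0:ℝ) s, (rr x τ + δ * g (rr x τ)) := by
      refine setIntegral_congr_fun measurableSet_Ioo (fun τ hτ => ?_)
      exact hrr1 τ ⟨hτ.1, lt_of_lt_of_le hτ.2 hs1⟩
    rw [hcong, integral_add (hrrx_int_s s hs1) ((hgrr_int_s s hs1).const_mul δ),
      integral_const_mul, hH]
  have hI2 : ∀ s : ℝ, 0 ≤ s → s ≤ 1 →
      (∫ τ in Ioo (0:ℝ) s, rr x₂ τ) = (∫ τ in Ioo (0:ℝ) s, rr x τ) - δ * H s := by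
    intro s h0s hs1
    have hcong : ∫ τ in Ioo (0:ℝ) s, rr x₂ τ
        = ∫ τ in Ioo (0:ℝ) s, (rr x τ - δ * g (rr x τ)) := by
      refine setIntegral_congr_fun measurableSet_Ioo (fun τ hτ => ?_)
      exact hrr2 τ ⟨hτ.1, lt_of_lt_of_le hτ.2 hs1⟩
    rw [hcong, integral_sub (hrrx_int_s s hs1) ((hgrr_int_s s hs1).const_mul δ),
      integral_const_mul, hH]
  have hH_lo : ∀ s : ℝ, s ≤ b 4 → H s = 0 := by
    intro s hs
    rw [hH]
    simp only
    rw [setIntegral_congr_fun measurableSet_Ioo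
      (g := fun _ => (0:ℝ)) (fun τ hτ => ?_), integral_zero]
    have hτI : τ ∈ Ioo (0:ℝ) 1 := ⟨hτ.1, lt_of_lt_of_le hτ.2 (le_trans hs hb4I.2.le)⟩
    have : v 4 ≤ rr x τ := by
      rw [← hbrr 4]
      exact rr_antitoneOn hxm hτI hb4I (le_trans hτ.2.le hs)
    exact hgz_hi _ this
  have hH1 : H 1 = 0 := by
    rw [hH]
    simp only
    have : ∫ τ in Ioo (0:ℝ) 1, g (rr x τ) = ∫ τ, g (rr x τ) ∂nu := by rw [hnu_def]
    rw [this, integral_comp_eq hxm hgcont, hgzero_int]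
  have hH_hi : ∀ s : ℝ, b 0 ≤ s → s ≤ 1 → H s = 0 := by
    intro s hs hs1
    have h0s : 0 < s := lt_of_lt_of_le hb0I.1 hs
    rcases eq_or_lt_of_le hs1 with h | h
    · rw [h]; exact hH1
    · have hsplit : Ioo (0:ℝ) s ∪ Ico s 1 = Ioo (0:ℝ) 1 := Ioo_union_Ico_eq_Ioo h0s hs1
      have hdisj : Disjoint (Ioo (0:ℝ) s) (Ico s 1) := by
        rw [Set.disjoint_left]
        intro a ha ha'
        exact absurd ha.2 (not_lt.mpr ha'.1)
      have hzero : ∫ τ in Ico s 1, g (rr x τ) = 0 := by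
        rw [setIntegral_congr_fun measurableSet_Ico
          (g := fun _ => (0:ℝ)) (fun τ hτ => ?_), integral_zero]
        have hτI : τ ∈ Ioo (0:ℝ) 1 := ⟨lt_of_lt_of_le h0s hτ.1, hτ.2⟩
        have : rr x τ ≤ v 0 := by
          rw [← hbrr 0]
          exact rr_antitoneOn hxm hb0I hτI (le_trans hs hτ.1)
        exact hgz_lo _ this
      have hint1 : IntegrableOn (fun τ => g (rr x τ)) (Ico s 1) volume := by
        have : IntegrableOn (fun τ => g (rr x τ)) (Ioo (0:ℝ) 1) volume := by
          rw [IntegrableOn, ← hnu_def]; exact hgrr_int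
        refine this.mono_set (fun a ha => ⟨lt_of_lt_of_le h0s ha.1, ha.2⟩)
      have := setIntegral_union hdisj measurableSet_Ico (hgrr_int_s s hs1) hint1
        (f := fun τ => g (rr x τ)) (μ := volume)
      rw [hsplit] at this
      have h1 := hH1
      rw [hH] at h1 ⊢
      simp only at h1 ⊢
      rw [this, hzero] at h1
      linarith
  have hHbound : ∀ s : ℝ, s ≤ 1 → |H s| ≤ M := by
    intro s hs1
    rw [hH]
    simp only
    have habs : |∫ τ in Ioo (0:ℝ) s, g (rr x τ)| ≤ ∫ τ in Ioo (0:ℝ) s, |g (rr x τ)| := by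
      have h := norm_integral_le_integral_norm (μ := volume.restrict (Ioo (0:ℝ) s))
        (f := fun τ => g (rr x τ))
      simpa [Real.norm_eq_abs] using h
    refine le_trans habs ?_
    have hmono : (∫ τ in Ioo (0:ℝ) s, |g (rr x τ)|) ≤ ∫ τ in Ioo (0:ℝ) 1, |g (rr x τ)| := by
      refine setIntegral_mono_set ?_ ?_ ?_
      · rw [IntegrableOn, ← hnu_def]; exact habs_int
      · filter_upwards with τ
        exact abs_nonneg _
      · exact HasSubset.Subset.eventuallyLE (Ioo_subset_Ioo_right hs1)
    refine le_trans hmono ?_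
    rw [hM, hnu_def]
  -- membership of the perturbed functions in Ω(y)
  have hxi' : Integrable x nu := hxi
  have hgx_int : Integrable (fun u => g (x u)) nu :=
    integrable_comp hxm.aemeasurable hgcont hgbound
  have hx₁mem : x₁ ∈ Omega y := by
    constructor
    · rw [IntegrableOn, ← hnu_def]
      exact hxi'.add (hgx_int.const_mul δ)
    · constructor
      · intro s hs
        rw [hI1 s hs.1 hs.2.le]
        rcases le_or_gt s (b 4) with hle | hgt
        · rw [hH_lo s hle, mul_zero, add_zero]
          exact hMaj.1 s hs
        · rcases le_or_gt (b 0) s with hle0 | hlt0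
          · rw [hH_hi s hle0 hs.2.le, mul_zero, add_zero]
            exact hMaj.1 s hs
          · have hsm : s ∈ Icc (b 4) (b 0) := ⟨hgt.le, hlt0.le⟩
            have hb := hHbound s hs.2.le
            have habs := le_abs_self (H s)
            have h1 : δ * H s ≤ δ * M := by nlinarith
            have h2 := hΔeq s hs.1 hs.2.le
            have h3 := hηle s hsm
            linarith
      · rw [hI1 1 zero_le_one le_rfl, hH1, mul_zero, add_zero]
        exact hMaj.2
  have hx₂mem : x₂ ∈ Omega y := by
    constructor
    · rw [IntegrableOn, ← hnu_def]
      exact hxi'.sub (hgx_int.const_mul δ)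
    · constructor
      · intro s hs
        rw [hI2 s hs.1 hs.2.le]
        rcases le_or_gt s (b 4) with hle | hgt
        · rw [hH_lo s hle, mul_zero, sub_zero]
          exact hMaj.1 s hs
        · rcases le_or_gt (b 0) s with hle0 | hlt0
          · rw [hH_hi s hle0 hs.2.le, mul_zero, sub_zero]
            exact hMaj.1 s hs
          · have hsm : s ∈ Icc (b 4) (b 0) := ⟨hgt.le, hlt0.le⟩
            have hb := hHbound s hs.2.le
            have habs := neg_abs_le (H s)
            have h1 : - (δ * H s) ≤ δ * M := by nlinarith
            have h2 := hΔeq s hs.1 hs.2.le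
            have h3 := hηle s hsm
            linarith
      · rw [hI2 1 zero_le_one le_rfl, hH1, mul_zero, sub_zero]
        exact hMaj.2
  -- extremality yields a contradiction
  have havg : ∀ᵐ u ∂(volume.restrict (Ioo (0:ℝ) 1)), x u = (x₁ u + x₂ u)/2 := by
    filter_upwards with u
    show x u = ((x u + δ * g (x u)) + (x u - δ * g (x u)))/2
    ring
  have hae : ∀ᵐ u ∂nu, x₁ u = x₂ u := by
    rw [hnu_def]
    exact hext x₁ hx₁mem x₂ hx₂mem havg
  have hgzero_ae : ∀ᵐ u ∂nu, g (x u) = 0 := by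
    filter_upwards [hae] with u hu
    have hu' : x u + δ * g (x u) = x u - δ * g (x u) := hu
    have h2 : δ * g (x u) = 0 := by linarith
    exact (mul_eq_zero.mp h2).resolve_left (ne_of_gt hδpos)
  set p' : ℝ := (pp + v 3)/2 with hp'
  set q' : ℝ := (v 3 + qp)/2 with hq'
  have hppv3 : pp < v 3 := by rw [hpp]; linarith
  have hv3qp : v 3 < qp := by rw [hqp]; linarith
  have hEpos : 0 < nu ({u | p' < x u} \ {u | q' < x u}) := by
    refine window_pos hxm (hbI 3) ?_ ?_
    · rw [hbrr 3, hp']; linarith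
    · rw [hbrr 3, hq']; linarith
  have hsubE : ({u | p' < x u} \ {u | q' < x u}) ⊆ {u | g (x u) ≠ 0} := by
    intro u hu
    obtain ⟨hu1, hu2⟩ := hu
    simp only [mem_setOf_eq] at hu1 hu2 ⊢
    push_neg at hu2
    have hppp' : pp < p' := by rw [hp']; linarith
    have hq'qp : q' < qp := by rw [hq']; linarith
    have hxupp : pp < x u := lt_trans hppp' hu1
    have hxuqp : x u < qp := lt_of_le_of_lt hu2 hq'qp
    have hqmxu : qm ≤ x u := by
      have : qm < pp := hqmpp
      linarith
    have hzero : hat pm qm (x u) = 0 := hat_zero_right hqmxu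
    have hposhat : 0 < hat pp qp (x u) := hat_pos hxupp hxuqp
    rw [hgw, hzero, mul_zero, sub_zero]
    exact ne_of_gt (mul_pos hN hposhat)
  have h0 : nu {u | g (x u) ≠ 0} = 0 := by
    rw [ae_iff] at hgzero_ae
    exact hgzero_ae
  have := measure_mono_null hsubE h0
  rw [this] at hEpos
  exact lt_irrefl _ hEpos



end Key

end AuxRR

open RRAux L2 L3 L4 L5 Main Key in
theorem rr_step_on_strict_interval (y x : ℝ → ℝ)
    (hy : IntegrableOn y (Ioo (0:ℝ) 1))
    (hx : ExtremePt (Omega y) x)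
    (t₁ t₂ : ℝ) (ht : t₁ < t₂) (ht₁ : (0:ℝ) ≤ t₁) (ht₂ : t₂ ≤ 1)
    (hstrict : ∀ s ∈ Ioo t₁ t₂,
      (∫ t in Ioo (0:ℝ) s, rr x t) < ∫ t in Ioo (0:ℝ) s, rr y t) :
    (∀ t ∈ Ioo t₁ t₂, ∃ ε > (0:ℝ), ∀ u ∈ Ico t (t + ε), rr x u = rr x t) ∧
      (rr x '' Ioo t₁ t₂).Countable := by
  obtain ⟨⟨hxi, hMaj⟩, hextreme⟩ := hx
  -- measurable representatives of x and y
  obtain ⟨x', hx'sm, hxx'⟩ := hxi.aestronglyMeasurable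
  obtain ⟨y', hy'sm, hyy'⟩ := hy.aestronglyMeasurable
  have hx'meas : Measurable x' := hx'sm.measurable
  have hy'meas : Measurable y' := hy'sm.measurable
  have hrrxx : rr x = rr x' := rr_congr hxx'
  have hrryy : rr y = rr y' := rr_congr hyy'
  have hxi' : IntegrableOn x' (Ioo (0:ℝ) 1) volume := hxi.congr_fun_ae hxx'
  have hyi' : IntegrableOn y' (Ioo (0:ℝ) 1) volume := hy.congr_fun_ae hyy'
  have hrry_int : Integrable (rr y) nu := by
    rw [hrryy]
    exact integrable_rr hy'meas hyi'
  have hMaj' : Maj x' y := by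
    unfold Maj at hMaj ⊢
    rw [← hrrxx]
    exact hMaj
  have hext' : ∀ x₁ ∈ Omega y, ∀ x₂ ∈ Omega y,
      (∀ᵐ u ∂(volume.restrict (Ioo (0:ℝ) 1)), x' u = (x₁ u + x₂ u) / 2) →
      (∀ᵐ u ∂(volume.restrict (Ioo (0:ℝ) 1)), x₁ u = x₂ u) := by
    intro x₁ h₁ x₂ h₂ havg
    refine hextreme x₁ h₁ x₂ h₂ ?_
    filter_upwards [havg, hxx'] with u h1 h2
    rw [h2]
    exact h1
  have hstrict' : ∀ s ∈ Ioo t₁ t₂,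
      (∫ τ in Ioo (0:ℝ) s, rr x' τ) < ∫ τ in Ioo (0:ℝ) s, rr y τ := by
    intro s hs
    rw [← hrrxx]
    exact hstrict s hs
  have hpart1 : ∀ t ∈ Ioo t₁ t₂, ∃ ε > (0:ℝ), ∀ u ∈ Ico t (t + ε), rr x u = rr x t := by
    intro t htm
    obtain ⟨ε, hε, hconst⟩ :=
      exists_const_right y x' hx'meas hxi' hrry_int hMaj' hext' ht₁ ht₂ hstrict' htm
    exact ⟨ε, hε, fun u hu => by rw [hrrxx]; exact hconst u hu⟩
  refine ⟨hpart1, ?_⟩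
  have hsub : rr x '' Ioo t₁ t₂ ⊆ range (fun q : ℚ => rr x (q:ℝ)) := by
    rintro v ⟨t, htm, rfl⟩
    obtain ⟨ε, hε, hconst⟩ := hpart1 t htm
    have hlt : t < min (t+ε) t₂ := lt_min (by linarith) htm.2
    obtain ⟨q, hq1, hq2⟩ := exists_rat_btwn hlt
    have hq2' : (q:ℝ) < t + ε := lt_of_lt_of_le hq2 (min_le_left _ _)
    exact ⟨q, hconst q ⟨hq1.le, hq2'⟩⟩
  exact Set.Countable.mono hsub (Set.countable_range _)
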